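/- Given a commutative triangle of functors f ∘ ψ = p where ψ : X ⟶ A is bijective-on-objects and p : X ⟶ B is a discrete opfibration, the functor f : A ⟶ B admits a delta lens structure, with lifts defined by φ(a, u) = ψ(θ(ψ⁻¹(a), u)) where θ denotes the unique lifts of the discrete opfibration p. -/

import Mathlib

open CategoryTheory

def IsDiscreteOpfibration {X B : Type*} [Category X] [Category B] (g : X ⥤ B) : Prop :=
  ∀ (x : X) (b : B) (u : g.obj x ⟶ b),
    ∃! p : Σ x' : X, x ⟶ x', ∃ h : g.obj p.1 = b, g.map p.2 = u ≫ eqToHom h.symm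
structure DeltaLens {A B : Type*} [Category A] [Category B] (f : A ⥤ B) where
  tgt : ∀ (a : A) {b : B}, (f.obj a ⟶ b) → A
  lift : ∀ (a : A) {b : B} (u : f.obj a ⟶ b), a ⟶ tgt a u
  tgt_obj : ∀ (a : A) {b : B} (u : f.obj a ⟶ b), f.obj (tgt a u) = b
  map_lift : ∀ (a : A) {b : B} (u : f.obj a ⟶ b),
    f.map (lift a u) = u ≫ eqToHom (tgt_obj a u).symm
  tgt_id : ∀ a : A, tgt a (𝟙 (f.obj a)) = a
  lift_id : ∀ a : A, lift a (𝟙 (f.obj a)) = eqToHom (tgt_id a).symm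
  tgt_comp : ∀ (a : A) {b c : B} (u : f.obj a ⟶ b) (v : b ⟶ c),
    tgt a (u ≫ v) = tgt (tgt a u) (eqToHom (tgt_obj a u) ≫ v)
  lift_comp : ∀ (a : A) {b c : B} (u : f.obj a ⟶ b) (v : b ⟶ c),
    lift a (u ≫ v) =
      lift a u ≫ lift (tgt a u) (eqToHom (tgt_obj a u) ≫ v) ≫ eqToHom (tgt_comp a u v).symm

section
variable {X B : Type} [SmallCategory X] [SmallCategory B] {F : X ⥤ B}
  (hp : IsDiscreteOpfibration F)

noncomputable def dT (x : X) {b : B} (u : F.obj x ⟶ b) : X :=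
  (hp x b u).exists.choose.1

noncomputable def dθ (x : X) {b : B} (u : F.obj x ⟶ b) : x ⟶ dT hp x u :=
  (hp x b u).exists.choose.2

lemma dT_obj (x : X) {b : B} (u : F.obj x ⟶ b) : F.obj (dT hp x u) = b :=
  (hp x b u).exists.choose_spec.choose

lemma dmap (x : X) {b : B} (u : F.obj x ⟶ b) :
    F.map (dθ hp x u) = u ≫ eqToHom (dT_obj hp x u).symm :=
  (hp x b u).exists.choose_spec.choose_spec

lemma duniq {x x' : X} {b : B} (u : F.obj x ⟶ b) (w : x ⟶ x') (h : F.obj x' = b)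
    (hw : F.map w = u ≫ eqToHom h.symm) :
    ∃ e : dT hp x u = x', dθ hp x u = w ≫ eqToHom e.symm := by
  obtain ⟨q, hq, huniq⟩ := hp x b u
  have e1 : (⟨dT hp x u, dθ hp x u⟩ : Σ y, x ⟶ y) = q :=
    huniq _ ⟨dT_obj hp x u, dmap hp x u⟩
  have e2 : (⟨x', w⟩ : Σ y, x ⟶ y) = q := huniq _ ⟨h, hw⟩
  have e3 : (⟨dT hp x u, dθ hp x u⟩ : Σ y, x ⟶ y) = ⟨x', w⟩ := e1.trans e2.symm
  obtain ⟨e4, e5⟩ := Sigma.mk.inj_iff.mp e3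
  refine ⟨e4, ?_⟩
  cases e4
  simpa using eq_of_heq e5

end

section
variable {X A B : Type} [SmallCategory X] [SmallCategory A] [SmallCategory B]
  (ψ : X ⥤ A) (f : A ⥤ B) (hψ : Function.Bijective ψ.obj)
  (hp : IsDiscreteOpfibration (ψ ⋙ f))

noncomputable def xof (a : A) : X := (Equiv.ofBijective ψ.obj hψ).symm a

lemma ψ_xof (a : A) : ψ.obj (xof ψ hψ a) = a :=
  (Equiv.ofBijective ψ.obj hψ).apply_symm_apply a

lemma xof_ψ (x : X) : xof ψ hψ (ψ.obj x) = x :=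
  (Equiv.ofBijective ψ.obj hψ).symm_apply_apply x

noncomputable def uu {a : A} {b : B} (u : f.obj a ⟶ b) : (ψ ⋙ f).obj (xof ψ hψ a) ⟶ b :=
  eqToHom (congrArg f.obj (ψ_xof ψ hψ a)) ≫ u

lemma main {x x' : X} {b : B} (u : f.obj (ψ.obj x) ⟶ b) (w : x ⟶ x')
    (h : f.obj (ψ.obj x') = b) (hw : f.map (ψ.map w) = u ≫ eqToHom h.symm) :
    ∃ h' : dT hp (xof ψ hψ (ψ.obj x)) (uu ψ f hψ u) = x',
      dθ hp (xof ψ hψ (ψ.obj x)) (uu ψ f hψ u) =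
        eqToHom (xof_ψ ψ hψ x) ≫ w ≫ eqToHom h'.symm := by
  have := duniq hp (uu ψ f hψ u) (eqToHom (xof_ψ ψ hψ x) ≫ w) h (by
    simp only [Functor.map_comp, eqToHom_map, uu, Functor.comp_map, hw,
      Category.assoc, eqToHom_trans_assoc])
  simpa using this

lemma dmap' (x : X) {b : B} (u : (ψ ⋙ f).obj x ⟶ b) :
    f.map (ψ.map (dθ hp x u)) = u ≫ eqToHom (dT_obj hp x u).symm := dmap hp x u

noncomputable def L : DeltaLens f where
  tgt a _ u := ψ.obj (dT hp (xof ψ hψ a) (uu ψ f hψ u))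
  lift a _ u := eqToHom (ψ_xof ψ hψ a).symm ≫ ψ.map (dθ hp (xof ψ hψ a) (uu ψ f hψ u))
  tgt_obj a _ u := dT_obj hp _ _
  map_lift a b u := by
    simp [dmap' ψ f hp, uu, eqToHom_map]
  tgt_id a := by
    obtain ⟨e, _⟩ := duniq hp (uu ψ f hψ (𝟙 (f.obj a))) (𝟙 (xof ψ hψ a))
      (congrArg f.obj (ψ_xof ψ hψ a)) (by simp [uu])
    exact (congrArg ψ.obj e).trans (ψ_xof ψ hψ a)
  lift_id a := by
    obtain ⟨e, he⟩ := duniq hp (uu ψ f hψ (𝟙 (f.obj a))) (𝟙 (xof ψ hψ a))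
      (congrArg f.obj (ψ_xof ψ hψ a)) (by simp [uu])
    simp [he, eqToHom_map]
  tgt_comp a b c u v := by
    obtain ⟨e, _⟩ := duniq hp (uu ψ f hψ (u ≫ v))
      (dθ hp (xof ψ hψ a) (uu ψ f hψ u) ≫
        eqToHom (xof_ψ ψ hψ (dT hp (xof ψ hψ a) (uu ψ f hψ u))).symm ≫
        dθ hp (xof ψ hψ (ψ.obj (dT hp (xof ψ hψ a) (uu ψ f hψ u))))
          (uu ψ f hψ (eqToHom (dT_obj hp (xof ψ hψ a) (uu ψ f hψ u)) ≫ v)))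
      (dT_obj hp _ _) (by
        unfold uu
        simp [dmap' ψ f hp, eqToHom_map])
    exact congrArg ψ.obj e
  lift_comp a b c u v := by
    obtain ⟨e, he⟩ := duniq hp (uu ψ f hψ (u ≫ v))
      (dθ hp (xof ψ hψ a) (uu ψ f hψ u) ≫
        eqToHom (xof_ψ ψ hψ (dT hp (xof ψ hψ a) (uu ψ f hψ u))).symm ≫
        dθ hp (xof ψ hψ (ψ.obj (dT hp (xof ψ hψ a) (uu ψ f hψ u))))
          (uu ψ f hψ (eqToHom (dT_obj hp (xof ψ hψ a) (uu ψ f hψ u)) ≫ v)))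
      (dT_obj hp _ _) (by
        unfold uu
        simp [dmap' ψ f hp, eqToHom_map])
    simp [he, eqToHom_map]

end

/-- Given `ψ ⋙ f = p` with `ψ` bijective on objects and `p` a discrete opfibration,
`f` admits a delta lens structure whose chosen lifts are images under `ψ` of the
unique lifts of `p`. -/
theorem stmt5 {X A B : Type} [SmallCategory X] [SmallCategory A] [SmallCategory B]
    (ψ : X ⥤ A) (f : A ⥤ B) (p : X ⥤ B)
    (hψ : Function.Bijective ψ.obj) (hcomm : ψ ⋙ f = p)
    (hp : IsDiscreteOpfibration p) :
    ∃ L : DeltaLens f,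
      ∀ (x x' : X) (b : B) (u : f.obj (ψ.obj x) ⟶ b) (w : x ⟶ x')
        (h : f.obj (ψ.obj x') = b),
        f.map (ψ.map w) = u ≫ eqToHom h.symm →
        ∃ h' : L.tgt (ψ.obj x) u = ψ.obj x',
          L.lift (ψ.obj x) u = ψ.map w ≫ eqToHom h'.symm := by
  subst hcomm
  refine ⟨L ψ f hψ hp, ?_⟩
  intro x x' b u w h hw
  obtain ⟨h', hl⟩ := main ψ f hψ hp u w h hw
  refine ⟨(congrArg ψ.obj h' : _), ?_⟩
  show eqToHom (ψ_xof ψ hψ (ψ.obj x)).symm ≫ ψ.map (dθ hp (xof ψ hψ (ψ.obj x)) (uu ψ f hψ u)) = _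
  simp [hl, eqToHom_map]
  rfl
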